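/- arXiv:1311.5729 — 3 statements merged into one kernel-verified Lean document; each statement's English description precedes it below -/
import Mathlib

section
/- For any real h with 0 < |h| < 1/2, the integral ∫₀^{2π} |cos s + 1 + h|^{-1/2} ds is bounded by C · log(1/|h|) for some absolute constant C (i.e., the integral is O(log(1/|h|)) as h → 0). -/
open Real intervalIntegral
open MeasureTheory

open MeasureTheory Set Interval in
private lemma pendulum_sqrt3_lt : Real.sqrt 3 < 1.74 := by
  rw [show (1.74:ℝ) = Real.sqrt (1.74^2) from (Real.sqrt_sq (by norm_num)).symm]
  exact Real.sqrt_lt_sqrt (by norm_num) (by norm_num)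

private lemma pendulum_lt_sqrt3 : (1.7:ℝ) < Real.sqrt 3 := by
  rw [show (1.7:ℝ) = Real.sqrt (1.7^2) from (Real.sqrt_sq (by norm_num)).symm]
  exact Real.sqrt_lt_sqrt (by norm_num) (by norm_num)

private lemma pendulum_sin_chord {x : ℝ} (h0 : 0 ≤ x) (h1 : x ≤ 2 * π / 3) :
    3 * Real.sqrt 3 / (4 * π) * x ≤ Real.sin x := by
  have hπ := Real.pi_pos
  have hs3 := pendulum_sqrt3_lt
  have hs3' := pendulum_lt_sqrt3
  rcases le_or_gt x (π/2) with hx | hx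
  · refine le_trans ?_ (Real.mul_le_sin h0 hx)
    rw [div_mul_eq_mul_div, div_mul_eq_mul_div, div_le_div_iff₀ (by positivity) hπ]
    nlinarith [mul_nonneg h0 hπ.le, mul_le_mul_of_nonneg_right hs3.le (mul_nonneg h0 hπ.le)]
  · have hmem1 : π/3 ∈ Set.Icc (-(π/2)) (π/2) := by constructor <;> linarith
    have hmem2 : π - x ∈ Set.Icc (-(π/2)) (π/2) := by constructor <;> linarith
    have h2 : Real.sin (π/3) ≤ Real.sin (π - x) :=
      Real.strictMonoOn_sin.monotoneOn hmem1 hmem2 (by linarith)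
    rw [Real.sin_pi_sub, Real.sin_pi_div_three] at h2
    refine le_trans ?_ h2
    rw [div_mul_eq_mul_div, div_le_div_iff₀ (by positivity) (by norm_num)]
    nlinarith [mul_nonneg (sub_nonneg.2 h1) (Real.sqrt_nonneg 3)]

private lemma pendulum_key_lb {h a t₀ : ℝ} (ha : a = |h|) (ha0 : 0 < a) (ha2 : a < 1/2)
    (ht₀ : t₀ = Real.arccos (1 - a)) {t : ℝ} (ht : |t| ≤ π) :
    3 * Real.sqrt 3 / (4 * π ^ 2) * (|t| * |(|t| - t₀)|) ≤ |1 - Real.cos t + h| := by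
  have hπ := Real.pi_pos
  have hs3 := pendulum_sqrt3_lt
  have hs3' := pendulum_lt_sqrt3
  have hcos : Real.cos t₀ = 1 - a := by
    rw [ht₀]; exact Real.cos_arccos (by linarith) (by linarith)
  have ht₀0 : 0 < t₀ := ht₀ ▸ Real.arccos_pos.2 (by linarith)
  have ht₀π : t₀ ≤ π := ht₀ ▸ Real.arccos_le_pi _
  have ht₀3 : t₀ ≤ π / 3 := by
    by_contra hcon
    push_neg at hcon
    have := Real.cos_le_cos_of_nonneg_of_le_pi (by positivity) ht₀π hcon.le
    rw [hcos, Real.cos_pi_div_three] at this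
    linarith
  have hπ2 : (0:ℝ) < π ^ 2 := by positivity
  have haq : 2 * t₀ ^ 2 ≤ a * π ^ 2 := by
    have := Real.cos_le_one_sub_mul_cos_sq (x := t₀) (by rw [abs_of_pos ht₀0]; exact ht₀π)
    rw [hcos] at this
    have h2 : 2 / π ^ 2 * t₀ ^ 2 ≤ a := by linarith
    rw [div_mul_eq_mul_div, div_le_iff₀ hπ2] at h2; linarith
  set u := |t| with hu
  have hu0 : 0 ≤ u := abs_nonneg t
  have hcosu : Real.cos t = Real.cos u := (Real.cos_abs t).symm
  rcases le_or_gt 0 h with hsgn | hsgn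
  · have hha : h = a := by rw [ha, abs_of_nonneg hsgn]
    have h1 : 2 * u ^ 2 ≤ (1 - Real.cos u) * π ^ 2 := by
      have := Real.cos_le_one_sub_mul_cos_sq (x := u) (by rwa [abs_of_nonneg hu0])
      have h2 : 2 / π ^ 2 * u ^ 2 ≤ 1 - Real.cos u := by linarith
      rw [div_mul_eq_mul_div, div_le_iff₀ hπ2] at h2; linarith
    have hnn : 0 ≤ 1 - Real.cos t + h := by
      have := Real.cos_le_one t; linarith
    rw [abs_of_nonneg hnn, hcosu, hha, div_mul_eq_mul_div,
      div_le_iff₀ (by positivity : (0:ℝ) < 4 * π ^ 2)]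
    have habs : |u - t₀| ≤ u + t₀ := by
      rcases abs_cases (u - t₀) with ⟨he, _⟩ | ⟨he, _⟩ <;> linarith
    have key : 3 * Real.sqrt 3 * (u * |u - t₀|) ≤ 8 * (u ^ 2 + t₀ ^ 2) := by
      nlinarith [mul_le_mul_of_nonneg_left habs hu0, abs_nonneg (u - t₀),
        mul_le_mul_of_nonneg_right hs3.le (mul_nonneg hu0 (abs_nonneg (u - t₀))),
        sq_nonneg (u - t₀)]
    calc 3 * Real.sqrt 3 * (u * |u - t₀|) ≤ 8 * (u ^ 2 + t₀ ^ 2) := key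
      _ ≤ (1 - Real.cos u + a) * (4 * π ^ 2) := by nlinarith
  · have hha : h = -a := by rw [ha, abs_of_neg hsgn, neg_neg]
    have heq : 1 - Real.cos t + h = Real.cos t₀ - Real.cos u := by
      rw [hcosu, hha, hcos]; ring
    rw [heq, Real.cos_sub_cos]
    have harg1 : 0 ≤ (t₀ + u) / 2 := by positivity
    have harg2 : (t₀ + u) / 2 ≤ 2 * π / 3 := by linarith
    have hs1 : 3 * Real.sqrt 3 / (4 * π) * ((t₀ + u) / 2) ≤ Real.sin ((t₀ + u) / 2) :=
      pendulum_sin_chord harg1 harg2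
    have hs1' : 0 ≤ Real.sin ((t₀ + u) / 2) := le_trans (by positivity) hs1
    have harg3 : |(t₀ - u) / 2| ≤ π / 2 := by
      rw [abs_div, abs_of_pos (by norm_num : (0:ℝ) < 2)]
      rcases abs_cases (t₀ - u) with ⟨he, _⟩ | ⟨he, _⟩ <;> rw [he] <;> linarith
    have hs2 : 2 / π * (|u - t₀| / 2) ≤ |Real.sin ((t₀ - u) / 2)| := by
      have := Real.mul_abs_le_abs_sin harg3
      rwa [abs_div, abs_sub_comm, abs_of_pos (by norm_num : (0:ℝ) < 2)] at this
    rw [abs_mul, abs_mul, abs_of_nonpos (by norm_num : (-2:ℝ) ≤ 0), abs_of_nonneg hs1', neg_neg]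
    have hprod := mul_le_mul hs1 hs2 (by positivity) hs1'
    calc 3 * Real.sqrt 3 / (4 * π ^ 2) * (u * |u - t₀|)
        ≤ 2 * ((3 * Real.sqrt 3 / (4 * π) * ((t₀ + u) / 2)) * (2 / π * (|u - t₀| / 2))) := by
          have e1 : 2 * ((3 * Real.sqrt 3 / (4 * π) * ((t₀ + u) / 2)) * (2 / π * (|u - t₀| / 2)))
              = 3 * Real.sqrt 3 / (4 * π ^ 2) * ((t₀ + u) * |u - t₀|) := by
            field_simp
          rw [e1]
          exact mul_le_mul_of_nonneg_left
            (mul_le_mul_of_nonneg_right (by linarith : u ≤ t₀ + u) (abs_nonneg _))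
            (by positivity)
      _ ≤ 2 * (Real.sin ((t₀ + u) / 2) * |Real.sin ((t₀ - u) / 2)|) :=
          mul_le_mul_of_nonneg_left hprod (by norm_num)
      _ = 2 * Real.sin ((t₀ + u) / 2) * |Real.sin ((t₀ - u) / 2)| := by ring

open MeasureTheory in
private lemma pendulum_piece {a b : ℝ} (hab : a ≤ b) {f g : ℝ → ℝ}
    (hfm : Measurable f) (hf0 : ∀ t, 0 ≤ f t)
    (hg : IntervalIntegrable g volume a b)
    (hbd : ∀ᵐ t ∂(volume : Measure ℝ), t ∈ Set.Ioc a b → f t ≤ g t) :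
    IntervalIntegrable f volume a b ∧ (∫ t in a..b, f t) ≤ ∫ t in a..b, g t := by
  have hres : ∀ᵐ t ∂(volume.restrict (Set.Ioc a b)), f t ≤ g t :=
    (ae_restrict_iff' measurableSet_Ioc).2 hbd
  have hgi : IntegrableOn g (Set.Ioc a b) := hg.1
  have hfi : IntegrableOn f (Set.Ioc a b) := by
    refine MeasureTheory.Integrable.mono hgi hfm.aestronglyMeasurable ?_
    filter_upwards [hres] with t ht
    rw [Real.norm_eq_abs, Real.norm_eq_abs, abs_of_nonneg (hf0 t),
      abs_of_nonneg ((hf0 t).trans ht)]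
    exact ht
  refine ⟨⟨hfi, ?_⟩, ?_⟩
  · rw [Set.Ioc_eq_empty (not_lt.2 hab)]; exact integrableOn_empty
  · rw [intervalIntegral.integral_of_le hab, intervalIntegral.integral_of_le hab]
    exact MeasureTheory.integral_mono_of_nonneg (Filter.Eventually.of_forall hf0) hgi hres

private lemma pendulum_rpow_int_val {c : ℝ} (hc : 0 < c) :
    (∫ t in (0:ℝ)..c, t ^ (-(1:ℝ)/2)) = 2 * c ^ ((1:ℝ)/2) := by
  rw [integral_rpow (Or.inl (by norm_num))]
  rw [Real.zero_rpow (by norm_num)]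
  norm_num
  ring

set_option maxHeartbeats 2000000 in
/-- Logarithmic estimate for the pendulum period integral near the separatrix:
for `0 < |h| < 1/2`, `∫₀^{2π} |cos s + 1 + h|^{-1/2} ds ≤ C·log(1/|h|)`. -/
theorem pendulum_period_log_estimate :
    ∃ C : ℝ, 0 < C ∧ ∀ h : ℝ, 0 < |h| → |h| < 1 / 2 →
      (∫ s in (0:ℝ)..(2 * π), |Real.cos s + 1 + h| ^ (-(1:ℝ)/2))
        ≤ C * Real.log (1 / |h|) := by
  classical
  have hπ := Real.pi_pos
  refine ⟨28 * (3 * Real.sqrt 3 / (4 * π ^ 2)) ^ (-(1:ℝ)/2), by positivity, ?_⟩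
  intro h ha0 ha2
  set a := |h| with ha
  set t₀ := Real.arccos (1 - a) with ht₀def
  set M := (3 * Real.sqrt 3 / (4 * π ^ 2)) ^ (-(1:ℝ)/2) with hM
  have hM0 : 0 < M := Real.rpow_pos_of_pos (by positivity) _
  have hcos : Real.cos t₀ = 1 - a := Real.cos_arccos (by linarith) (by linarith)
  have ht₀0 : 0 < t₀ := Real.arccos_pos.2 (by linarith)
  have ht₀π : t₀ ≤ π := Real.arccos_le_pi _
  have ht₀3 : t₀ ≤ π / 3 := by
    by_contra hcon
    push_neg at hcon
    have := Real.cos_le_cos_of_nonneg_of_le_pi (by positivity) ht₀π hcon.le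
    rw [hcos, Real.cos_pi_div_three] at this
    linarith
  have ht₀a : 2 * a ≤ t₀ ^ 2 := by
    have := Real.one_sub_sq_div_two_le_cos (x := t₀)
    rw [hcos] at this; linarith
  set H : ℝ → ℝ := fun t => |t| ^ (-(1:ℝ)/2) * |(|t| - t₀)| ^ (-(1:ℝ)/2) with hH
  have hHm : Measurable H := by fun_prop
  have hH0 : ∀ t, 0 ≤ H t := fun t =>
    mul_nonneg (Real.rpow_nonneg (abs_nonneg _) _) (Real.rpow_nonneg (abs_nonneg _) _)
  have hval : ∀ x : ℝ, 0 < x → x ^ (-(1:ℝ)/2) * (2 * x ^ ((1:ℝ)/2)) = 2 := by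
    intro x hx
    rw [show x ^ (-(1:ℝ)/2) * (2 * x ^ ((1:ℝ)/2)) = 2 * x ^ (-(1:ℝ)/2 + (1:ℝ)/2) by
      rw [Real.rpow_add hx]; ring]
    norm_num
  -- piece 1
  have P1 : IntervalIntegrable H volume 0 (t₀/2) ∧
      (∫ t in (0:ℝ)..(t₀/2), H t) ≤ 2 := by
    have hg : IntervalIntegrable (fun t : ℝ => (t₀/2) ^ (-(1:ℝ)/2) * t ^ (-(1:ℝ)/2))
        volume 0 (t₀/2) := (intervalIntegrable_rpow' (by norm_num)).const_mul _
    have hbd : ∀ᵐ t ∂(volume : MeasureTheory.Measure ℝ), t ∈ Set.Ioc (0:ℝ) (t₀/2) →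
        H t ≤ (t₀/2) ^ (-(1:ℝ)/2) * t ^ (-(1:ℝ)/2) := by
      refine Filter.Eventually.of_forall fun t ht => ?_
      obtain ⟨ht1, ht2⟩ := ht
      have e1 : |t| = t := abs_of_pos ht1
      have e2 : |t - t₀| = t₀ - t := by rw [abs_of_nonpos (by linarith), neg_sub]
      rw [hH]; dsimp only; rw [e1, e2, mul_comm]
      refine mul_le_mul_of_nonneg_right ?_ (Real.rpow_nonneg ht1.le _)
      exact Real.rpow_le_rpow_of_nonpos (by linarith) (by linarith) (by norm_num)
    refine ⟨(pendulum_piece (by linarith) hHm hH0 hg hbd).1,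
      le_trans (pendulum_piece (by linarith) hHm hH0 hg hbd).2 ?_⟩
    rw [intervalIntegral.integral_const_mul, pendulum_rpow_int_val (by linarith)]
    rw [hval _ (by linarith)]
  -- piece 2
  have P2 : IntervalIntegrable H volume (t₀/2) t₀ ∧
      (∫ t in (t₀/2)..t₀, H t) ≤ 2 := by
    have hg : IntervalIntegrable (fun t : ℝ => (t₀/2) ^ (-(1:ℝ)/2) * (t₀ - t) ^ (-(1:ℝ)/2))
        volume (t₀/2) t₀ := by
      have := (intervalIntegrable_rpow' (r := -(1:ℝ)/2) (by norm_num) :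
        IntervalIntegrable (fun x : ℝ => x ^ (-(1:ℝ)/2)) volume (t₀/2) 0).comp_sub_left t₀
      rw [show t₀ - t₀/2 = t₀/2 by ring, sub_zero] at this
      exact this.const_mul _
    have hbd : ∀ᵐ t ∂(volume : MeasureTheory.Measure ℝ), t ∈ Set.Ioc (t₀/2) t₀ →
        H t ≤ (t₀/2) ^ (-(1:ℝ)/2) * (t₀ - t) ^ (-(1:ℝ)/2) := by
      refine Filter.Eventually.of_forall fun t ht => ?_
      obtain ⟨ht1, ht2⟩ := ht
      have e1 : |t| = t := abs_of_pos (by linarith)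
      have e2 : |t - t₀| = t₀ - t := by rw [abs_of_nonpos (by linarith), neg_sub]
      rw [hH]; dsimp only; rw [e1, e2]
      refine mul_le_mul_of_nonneg_right ?_ (Real.rpow_nonneg (by linarith) _)
      exact Real.rpow_le_rpow_of_nonpos (by linarith) (by linarith) (by norm_num)
    refine ⟨(pendulum_piece (by linarith) hHm hH0 hg hbd).1,
      le_trans (pendulum_piece (by linarith) hHm hH0 hg hbd).2 ?_⟩
    rw [intervalIntegral.integral_const_mul,
      intervalIntegral.integral_comp_sub_left (fun u : ℝ => u ^ (-(1:ℝ)/2)) t₀,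
      show t₀ - t₀ = 0 by ring, show t₀ - t₀/2 = t₀/2 by ring,
      pendulum_rpow_int_val (by linarith), hval _ (by linarith)]
  -- piece 3
  have P3 : IntervalIntegrable H volume t₀ (2*t₀) ∧
      (∫ t in t₀..(2*t₀), H t) ≤ 2 := by
    have hg : IntervalIntegrable (fun t : ℝ => t₀ ^ (-(1:ℝ)/2) * (t - t₀) ^ (-(1:ℝ)/2))
        volume t₀ (2*t₀) := by
      have := (intervalIntegrable_rpow' (r := -(1:ℝ)/2) (by norm_num) :
        IntervalIntegrable (fun x : ℝ => x ^ (-(1:ℝ)/2)) volume 0 t₀).comp_sub_right t₀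
      rw [zero_add, show t₀ + t₀ = 2*t₀ by ring] at this
      exact this.const_mul _
    have hbd : ∀ᵐ t ∂(volume : MeasureTheory.Measure ℝ), t ∈ Set.Ioc t₀ (2*t₀) →
        H t ≤ t₀ ^ (-(1:ℝ)/2) * (t - t₀) ^ (-(1:ℝ)/2) := by
      refine Filter.Eventually.of_forall fun t ht => ?_
      obtain ⟨ht1, ht2⟩ := ht
      have e1 : |t| = t := abs_of_pos (by linarith)
      have e2 : |t - t₀| = t - t₀ := abs_of_nonneg (by linarith)
      rw [hH]; dsimp only; rw [e1, e2]
      refine mul_le_mul_of_nonneg_right ?_ (Real.rpow_nonneg (by linarith) _)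
      exact Real.rpow_le_rpow_of_nonpos ht₀0 ht1.le (by norm_num)
    refine ⟨(pendulum_piece (by linarith) hHm hH0 hg hbd).1,
      le_trans (pendulum_piece (by linarith) hHm hH0 hg hbd).2 ?_⟩
    rw [intervalIntegral.integral_const_mul,
      intervalIntegral.integral_comp_sub_right (fun u : ℝ => u ^ (-(1:ℝ)/2)) t₀,
      show t₀ - t₀ = 0 by ring, show 2*t₀ - t₀ = t₀ by ring,
      pendulum_rpow_int_val ht₀0, hval _ ht₀0]
  -- piece 4
  have P4 : IntervalIntegrable H volume (2*t₀) π ∧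
      (∫ t in (2*t₀)..π, H t) ≤ 2 * Real.log (π / (2*t₀)) := by
    have hne : ∀ x : ℝ, x ∈ Set.uIcc (2*t₀) π → x ≠ 0 := by
      intro x hx
      rw [Set.uIcc_of_le (by linarith)] at hx
      exact ne_of_gt (lt_of_lt_of_le (by linarith) hx.1)
    have hg : IntervalIntegrable (fun t : ℝ => 2 * (1 / t)) volume (2*t₀) π :=
      (intervalIntegrable_one_div hne (continuousOn_id)).const_mul _
    have hbd : ∀ᵐ t ∂(volume : MeasureTheory.Measure ℝ), t ∈ Set.Ioc (2*t₀) π →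
        H t ≤ 2 * (1 / t) := by
      refine Filter.Eventually.of_forall fun t ht => ?_
      obtain ⟨ht1, ht2⟩ := ht
      have htp : 0 < t := by linarith
      have e1 : |t| = t := abs_of_pos htp
      have e2 : |t - t₀| = t - t₀ := abs_of_nonneg (by linarith)
      rw [hH]; dsimp only; rw [e1, e2]
      have hb1 : t ^ (-(1:ℝ)/2) ≤ (t/2) ^ (-(1:ℝ)/2) :=
        Real.rpow_le_rpow_of_nonpos (by linarith) (by linarith) (by norm_num)
      have hb2 : (t - t₀) ^ (-(1:ℝ)/2) ≤ (t/2) ^ (-(1:ℝ)/2) :=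
        Real.rpow_le_rpow_of_nonpos (by linarith) (by linarith) (by norm_num)
      calc t ^ (-(1:ℝ)/2) * (t - t₀) ^ (-(1:ℝ)/2)
          ≤ (t/2) ^ (-(1:ℝ)/2) * (t/2) ^ (-(1:ℝ)/2) :=
            mul_le_mul hb1 hb2 (Real.rpow_nonneg (by linarith) _)
              (Real.rpow_nonneg (by linarith) _)
        _ = 2 * (1 / t) := by
            rw [← Real.rpow_add (by linarith), show (-(1:ℝ)/2 + -(1:ℝ)/2) = -1 by norm_num,
              Real.rpow_neg_one, one_div, inv_div, div_eq_mul_inv]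
    refine ⟨(pendulum_piece (by linarith) hHm hH0 hg hbd).1,
      le_trans (pendulum_piece (by linarith) hHm hH0 hg hbd).2 ?_⟩
    have hne0 : (0:ℝ) ∉ Set.uIcc (2*t₀) π := fun hx => (hne 0 hx) rfl
    rw [intervalIntegral.integral_const_mul, integral_one_div hne0]
  -- integrability chains
  have I12 : IntervalIntegrable H volume 0 t₀ := P1.1.trans P2.1
  have I123 : IntervalIntegrable H volume 0 (2*t₀) := I12.trans P3.1
  have IH0π : IntervalIntegrable H volume 0 π := I123.trans P4.1
  have hHeven : ∀ x, H (-x) = H x := fun x => by rw [hH]; dsimp only; rw [abs_neg]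
  have IHneg : IntervalIntegrable H volume (-π) 0 := by
    have := (IntervalIntegrable.iff_comp_neg (f := H) (a := 0) (b := π) enorm_ne_top).mp IH0π
    simp only [hHeven] at this
    rw [neg_zero] at this
    exact this.symm
  have IHfull : IntervalIntegrable H volume (-π) π := IHneg.trans IH0π
  have Ig : IntervalIntegrable (fun s => M * H (s - π)) volume 0 (2*π) := by
    have := IHfull.comp_sub_right π
    rw [show -π + π = (0:ℝ) by ring, show π + π = 2*π by ring] at this
    exact this.const_mul M
  -- a.e. pointwise bound
  have hone : ∀ c : ℝ, ∀ᵐ s : ℝ ∂(volume : MeasureTheory.Measure ℝ), s ≠ c := by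
    intro c
    refine MeasureTheory.ae_iff.2 ?_
    simpa [not_not] using MeasureTheory.measure_singleton (c : ℝ)
  have hbd : ∀ᵐ s ∂(volume : MeasureTheory.Measure ℝ), s ∈ Set.Ioc 0 (2*π) →
      |Real.cos s + 1 + h| ^ (-(1:ℝ)/2) ≤ M * H (s - π) := by
    filter_upwards [hone π, hone (π - t₀), hone (π + t₀)] with s hs1 hs2 hs3 hmem
    obtain ⟨hm1, hm2⟩ := hmem
    have htle : |s - π| ≤ π := abs_le.2 ⟨by linarith, by linarith⟩
    have hkey := pendulum_key_lb ha ha0 ha2 ht₀def htle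
    have hcs : Real.cos s + 1 + h = 1 - Real.cos (s - π) + h := by
      have hc := Real.cos_add_pi (s - π)
      rw [show s - π + π = s by ring] at hc
      rw [hc]; ring
    have hpos : 0 < 3 * Real.sqrt 3 / (4 * π ^ 2) * (|s - π| * |(|s - π| - t₀)|) := by
      have h1 : 0 < |s - π| := abs_pos.2 (sub_ne_zero.2 hs1)
      have h2 : 0 < |(|s - π| - t₀)| := by
        refine abs_pos.2 (sub_ne_zero.2 ?_)
        intro he
        rcases (abs_eq ht₀0.le).1 he with h' | h'
        · exact hs3 (by linarith)
        · exact hs2 (by linarith)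
      positivity
    rw [hcs]
    calc |1 - Real.cos (s - π) + h| ^ (-(1:ℝ)/2)
        ≤ (3 * Real.sqrt 3 / (4 * π ^ 2) * (|s - π| * |(|s - π| - t₀)|)) ^ (-(1:ℝ)/2) :=
          Real.rpow_le_rpow_of_nonpos hpos hkey (by norm_num)
      _ = M * H (s - π) := by
          rw [Real.mul_rpow (by positivity) (by positivity),
            Real.mul_rpow (abs_nonneg _) (abs_nonneg _), hM, hH]
  have hfm : Measurable fun s : ℝ => |Real.cos s + 1 + h| ^ (-(1:ℝ)/2) := by fun_prop
  have hf0 : ∀ s : ℝ, 0 ≤ |Real.cos s + 1 + h| ^ (-(1:ℝ)/2) := fun s =>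
    Real.rpow_nonneg (abs_nonneg _) _
  have main1 := pendulum_piece (by positivity : (0:ℝ) ≤ 2*π) hfm hf0 Ig hbd
  -- computing the integral of the majorant
  have heq1 : (∫ s in (0:ℝ)..(2*π), M * H (s - π)) = M * ∫ t in (-π)..π, H t := by
    rw [intervalIntegral.integral_const_mul]
    congr 1
    have := intervalIntegral.integral_comp_sub_right (a := 0) (b := 2*π) H π
    rw [show (0:ℝ) - π = -π by ring, show 2*π - π = π by ring] at this
    exact this
  have heq2 : (∫ t in (-π:ℝ)..π, H t) = (∫ t in (-π:ℝ)..(0:ℝ), H t) + ∫ t in (0:ℝ)..π, H t :=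
    (intervalIntegral.integral_add_adjacent_intervals IHneg IH0π).symm
  have heq3 : (∫ t in (-π:ℝ)..(0:ℝ), H t) = ∫ t in (0:ℝ)..π, H t := by
    have := intervalIntegral.integral_comp_neg (a := (0:ℝ)) (b := π) H
    simp only [hHeven] at this
    rw [neg_zero] at this
    exact this.symm
  have hJsplit : (∫ t in (0:ℝ)..π, H t) = (((∫ t in (0:ℝ)..(t₀/2), H t)
      + ∫ t in (t₀/2)..t₀, H t) + ∫ t in t₀..(2*t₀), H t) + ∫ t in (2*t₀)..π, H t := by
    rw [intervalIntegral.integral_add_adjacent_intervals P1.1 P2.1,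
      intervalIntegral.integral_add_adjacent_intervals I12 P3.1,
      intervalIntegral.integral_add_adjacent_intervals I123 P4.1]
  have hJ : (∫ t in (0:ℝ)..π, H t) ≤ 6 + 2 * Real.log (π / (2*t₀)) := by
    rw [hJsplit]
    linarith [P1.2, P2.2, P3.2, P4.2]
  have hlog : Real.log (π / (2*t₀)) ≤ Real.log (1/a) := by
    have hle : π / (2*t₀) ≤ 1/a := by
      rw [div_le_div_iff₀ (by linarith) ha0]
      nlinarith [Real.pi_lt_d2]
    exact Real.log_le_log (by positivity) hle
  have hL : (1:ℝ)/2 ≤ Real.log (1/a) := by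
    have h2 : (2:ℝ) ≤ 1/a := by rw [le_div_iff₀ ha0]; linarith
    have h3 := Real.log_le_log (by norm_num) h2
    nlinarith [Real.log_two_gt_d9]
  calc (∫ s in (0:ℝ)..(2*π), |Real.cos s + 1 + h| ^ (-(1:ℝ)/2))
      ≤ ∫ s in (0:ℝ)..(2*π), M * H (s - π) := main1.2
    _ = M * ((∫ t in (0:ℝ)..π, H t) + (∫ t in (0:ℝ)..π, H t)) := by
        rw [heq1, heq2, heq3]
    _ ≤ M * (28 * Real.log (1/a)) := by
        refine mul_le_mul_of_nonneg_left ?_ hM0.le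
        nlinarith [hJ, hlog, hL]
    _ = 28 * M * Real.log (1/a) := by ring
end

section
/- For any α ∈ ℝ, the function φ(T) = ∫₀^T |cos(t − α)| dt − (2/π) T is π-periodic in T and satisfies |φ(T)| ≤ 2 Φ₀ for all T ≥ 0, where Φ₀ = √(1 − 4/π²) − (2/π) arccos(2/π). -/
open Real intervalIntegral

private lemma abs_cos_periodic (α : ℝ) :
    Function.Periodic (fun t => |Real.cos (t - α)|) π := by
  intro t
  simp only [add_sub_right_comm, Real.cos_add_pi, abs_neg]

private lemma G_periodic (α : ℝ) :
    Function.Periodic (fun t => max (|Real.cos (t - α)| - 2 / π) 0) π := by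
  intro t
  simp only [add_sub_right_comm, Real.cos_add_pi, abs_neg]

private lemma window_eq (f : ℝ → ℝ) (hf : Function.Periodic f π) (α : ℝ) :
    (∫ t in (0:ℝ)..π, f (t - α)) = ∫ t in (-(π/2))..(π/2), f t := by
  rw [intervalIntegral.integral_comp_sub_right]
  have h := hf.intervalIntegral_add_eq (-α) (-(π/2))
  rw [show (0:ℝ) - α = -α from by ring, show π - α = -α + π from by ring, h,
    show -(π/2) + π = π/2 from by ring]

private lemma intA : (∫ t in (-(π/2))..(π/2), |Real.cos t|) = 2 := by
  have : (∫ t in (-(π/2))..(π/2), |Real.cos t|) = ∫ t in (-(π/2))..(π/2), Real.cos t := by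
    apply intervalIntegral.integral_congr
    intro t ht
    rw [Set.uIcc_of_le (by linarith [Real.pi_pos])] at ht
    exact abs_of_nonneg (Real.cos_nonneg_of_mem_Icc ht)
  rw [this, integral_cos]
  norm_num

private lemma two_div_pi_mem : (0:ℝ) ≤ 2 / π ∧ (2:ℝ) / π ≤ 1 := by
  have h := Real.pi_gt_three
  constructor
  · positivity
  · rw [div_le_one (by linarith)]; linarith

private lemma intB : (∫ t in (-(π/2))..(π/2), max (|Real.cos t| - 2 / π) 0)
    = 2 * (Real.sqrt (1 - 4 / π ^ 2) - (2 / π) * Real.arccos (2 / π)) := by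
  have hπ := Real.pi_pos
  set c := Real.arccos (2 / π) with hc
  have hc0 : 0 ≤ c := Real.arccos_nonneg _
  have hc2 : c ≤ π / 2 := Real.arccos_le_pi_div_two.2 two_div_pi_mem.1
  have hcos : Real.cos c = 2 / π := Real.cos_arccos (by linarith [two_div_pi_mem.1]) two_div_pi_mem.2
  have hcont : Continuous fun t => max (|Real.cos t| - 2 / π) 0 :=
    (Real.continuous_cos.abs.sub continuous_const).max continuous_const
  have hint : ∀ a b : ℝ, IntervalIntegrable (fun t => max (|Real.cos t| - 2 / π) 0)
      MeasureTheory.volume a b := fun a b => hcont.intervalIntegrable a b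
  have hsplit1 : (∫ t in (-(π/2))..(-c), max (|Real.cos t| - 2 / π) 0)
      + (∫ t in (-c)..(π/2), max (|Real.cos t| - 2 / π) 0)
      = ∫ t in (-(π/2))..(π/2), max (|Real.cos t| - 2 / π) 0 :=
    intervalIntegral.integral_add_adjacent_intervals (hint _ _) (hint _ _)
  have hsplit2 : (∫ t in (-c)..c, max (|Real.cos t| - 2 / π) 0)
      + (∫ t in c..(π/2), max (|Real.cos t| - 2 / π) 0)
      = ∫ t in (-c)..(π/2), max (|Real.cos t| - 2 / π) 0 :=
    intervalIntegral.integral_add_adjacent_intervals (hint _ _) (hint _ _)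
  have hzero_right : (∫ t in c..(π/2), max (|Real.cos t| - 2 / π) 0) = 0 := by
    rw [intervalIntegral.integral_congr (g := fun _ => (0:ℝ))]
    · simp
    · intro t ht
      rw [Set.uIcc_of_le hc2] at ht
      have h1 : Real.cos t ≤ 2 / π := by
        rw [← hcos]
        exact Real.cos_le_cos_of_nonneg_of_le_pi hc0 (by linarith [ht.2]) ht.1
      have h2 : 0 ≤ Real.cos t :=
        Real.cos_nonneg_of_mem_Icc ⟨by linarith [ht.1], ht.2⟩
      show max (|Real.cos t| - 2 / π) 0 = 0
      rw [abs_of_nonneg h2]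
      exact max_eq_right (by linarith)
  have hzero_left : (∫ t in (-(π/2))..(-c), max (|Real.cos t| - 2 / π) 0) = 0 := by
    rw [intervalIntegral.integral_congr (g := fun _ => (0:ℝ))]
    · simp
    · intro t ht
      rw [Set.uIcc_of_le (by linarith)] at ht
      have h1 : Real.cos t ≤ 2 / π := by
        rw [← Real.cos_neg t, ← hcos]
        exact Real.cos_le_cos_of_nonneg_of_le_pi hc0 (by linarith [ht.1]) (by linarith [ht.2])
      have h2 : 0 ≤ Real.cos t :=
        Real.cos_nonneg_of_mem_Icc ⟨ht.1, by linarith [ht.2]⟩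
      show max (|Real.cos t| - 2 / π) 0 = 0
      rw [abs_of_nonneg h2]
      exact max_eq_right (by linarith)
  have hmid : (∫ t in (-c)..c, max (|Real.cos t| - 2 / π) 0)
      = ∫ t in (-c)..c, (Real.cos t - 2 / π) := by
    apply intervalIntegral.integral_congr
    intro t ht
    rw [Set.uIcc_of_le (by linarith)] at ht
    have h1 : 2 / π ≤ Real.cos t := by
      rw [← hcos, ← Real.cos_abs t]
      exact Real.cos_le_cos_of_nonneg_of_le_pi (abs_nonneg t) (by linarith)
        (abs_le.2 ⟨ht.1, ht.2⟩)
    have h2 : 0 ≤ Real.cos t := le_trans two_div_pi_mem.1 h1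
    show max (|Real.cos t| - 2 / π) 0 = Real.cos t - 2 / π
    rw [abs_of_nonneg h2]
    exact max_eq_left (by linarith)
  have hval : (∫ t in (-c)..c, (Real.cos t - 2 / π)) = 2 * Real.sin c - (2 / π) * (2 * c) := by
    rw [intervalIntegral.integral_sub (Real.continuous_cos.intervalIntegrable _ _)
      (intervalIntegrable_const), integral_cos, intervalIntegral.integral_const]
    rw [Real.sin_neg]
    ring_nf
  have hsin : Real.sin c = Real.sqrt (1 - 4 / π ^ 2) := by
    rw [hc, Real.sin_arccos]
    congr 1
    rw [div_pow]
    norm_num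
  rw [← hsplit1, ← hsplit2, hzero_left, hzero_right, hmid, hval, hsin]
  ring

private lemma abs_cos_per' : Function.Periodic (fun t => |Real.cos t|) π := by
  intro t; simp [Real.cos_add_pi]

private lemma int_period (α : ℝ) (T : ℝ) :
    (∫ t in T..(T + π), |Real.cos (t - α)|) = 2 := by
  have h := (abs_cos_periodic α).intervalIntegral_add_eq T 0
  rw [h]
  rw [zero_add, window_eq (fun t => |Real.cos t|) abs_cos_per' α]
  exact intA

/-- For any shift `α`, the function `φ(T) = ∫₀^T |cos(t − α)| dt − (2/π)T` is `π`-periodic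
and bounded by `2Φ₀` with `Φ₀ = √(1 − 4/π²) − (2/π)·arccos(2/π)`. -/
theorem periodic_error_bound (α : ℝ) :
    (∀ T : ℝ, (∫ t in (0:ℝ)..(T + π), |Real.cos (t - α)|) - (2 / π) * (T + π)
        = (∫ t in (0:ℝ)..T, |Real.cos (t - α)|) - (2 / π) * T) ∧
    (∀ T : ℝ, 0 ≤ T →
      |(∫ t in (0:ℝ)..T, |Real.cos (t - α)|) - (2 / π) * T|
        ≤ 2 * (Real.sqrt (1 - 4 / π ^ 2) - (2 / π) * Real.arccos (2 / π))) := by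
  have hπ := Real.pi_pos
  have hcont : Continuous fun t => |Real.cos (t - α)| :=
    (Real.continuous_cos.comp (continuous_id.sub continuous_const)).abs
  have hintc : ∀ a b : ℝ, IntervalIntegrable (fun t => |Real.cos (t - α)|)
      MeasureTheory.volume a b := fun a b => hcont.intervalIntegrable a b
  have hGcont : Continuous fun t => max (|Real.cos (t - α)| - 2 / π) 0 :=
    (hcont.sub continuous_const).max continuous_const
  have hGint : ∀ a b : ℝ, IntervalIntegrable (fun t => max (|Real.cos (t - α)| - 2 / π) 0)
      MeasureTheory.volume a b := fun a b => hGcont.intervalIntegrable a b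
  set B := 2 * (Real.sqrt (1 - 4 / π ^ 2) - (2 / π) * Real.arccos (2 / π)) with hB
  have hBval : (∫ t in (0:ℝ)..π, max (|Real.cos (t - α)| - 2 / π) 0) = B := by
    rw [window_eq (fun t => max (|Real.cos t| - 2 / π) 0)
      (by intro t; simp [Real.cos_add_pi]) α]
    exact intB
  have hB0 : 0 ≤ B := by
    rw [← hBval]
    exact intervalIntegral.integral_nonneg (le_of_lt hπ) (fun t _ => le_max_right _ _)
  have hper : ∀ T : ℝ, (∫ t in (0:ℝ)..(T + π), |Real.cos (t - α)|) - (2 / π) * (T + π)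
        = (∫ t in (0:ℝ)..T, |Real.cos (t - α)|) - (2 / π) * T := by
    intro T
    have hsplit : (∫ t in (0:ℝ)..T, |Real.cos (t - α)|) + (∫ t in T..(T+π), |Real.cos (t - α)|)
        = ∫ t in (0:ℝ)..(T+π), |Real.cos (t - α)| :=
      intervalIntegral.integral_add_adjacent_intervals (hintc _ _) (hintc _ _)
    rw [← hsplit, int_period α T]
    field_simp
    ring
  refine ⟨hper, ?_⟩
  have hbase : ∀ r : ℝ, 0 ≤ r → r ≤ π →
      |(∫ t in (0:ℝ)..r, |Real.cos (t - α)|) - (2 / π) * r| ≤ B := by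
    intro r hr0 hrπ
    have hφ : (∫ t in (0:ℝ)..r, |Real.cos (t - α)|) - (2 / π) * r
        = ∫ t in (0:ℝ)..r, (|Real.cos (t - α)| - 2 / π) := by
      rw [intervalIntegral.integral_sub (hintc _ _) intervalIntegrable_const,
        intervalIntegral.integral_const, smul_eq_mul]
      ring
    have hg0 : (∫ t in (0:ℝ)..π, (|Real.cos (t - α)| - 2 / π)) = 0 := by
      rw [intervalIntegral.integral_sub (hintc _ _) intervalIntegrable_const,
        intervalIntegral.integral_const, smul_eq_mul]
      have h2 := int_period α 0
      rw [zero_add] at h2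
      rw [h2]
      field_simp
      ring
    have hgint : ∀ a b : ℝ, IntervalIntegrable (fun t => |Real.cos (t - α)| - 2 / π)
        MeasureTheory.volume a b := fun a b => (hcont.sub continuous_const).intervalIntegrable a b
    have hGsplit : (∫ t in (0:ℝ)..r, max (|Real.cos (t - α)| - 2 / π) 0)
        + (∫ t in r..π, max (|Real.cos (t - α)| - 2 / π) 0)
        = ∫ t in (0:ℝ)..π, max (|Real.cos (t - α)| - 2 / π) 0 :=
      intervalIntegral.integral_add_adjacent_intervals (hGint _ _) (hGint _ _)
    have hG1nn : 0 ≤ ∫ t in (0:ℝ)..r, max (|Real.cos (t - α)| - 2 / π) 0 :=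
      intervalIntegral.integral_nonneg hr0 (fun t _ => le_max_right _ _)
    have hG2nn : 0 ≤ ∫ t in r..π, max (|Real.cos (t - α)| - 2 / π) 0 :=
      intervalIntegral.integral_nonneg hrπ (fun t _ => le_max_right _ _)
    have hle1 : (∫ t in (0:ℝ)..r, (|Real.cos (t - α)| - 2 / π))
        ≤ ∫ t in (0:ℝ)..r, max (|Real.cos (t - α)| - 2 / π) 0 :=
      intervalIntegral.integral_mono_on hr0 (hgint _ _) (hGint _ _)
        (fun t _ => le_max_left _ _)
    have hle2 : (∫ t in r..π, (|Real.cos (t - α)| - 2 / π))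
        ≤ ∫ t in r..π, max (|Real.cos (t - α)| - 2 / π) 0 :=
      intervalIntegral.integral_mono_on hrπ (hgint _ _) (hGint _ _)
        (fun t _ => le_max_left _ _)
    have hgsplit : (∫ t in (0:ℝ)..r, (|Real.cos (t - α)| - 2 / π))
        + (∫ t in r..π, (|Real.cos (t - α)| - 2 / π))
        = ∫ t in (0:ℝ)..π, (|Real.cos (t - α)| - 2 / π) :=
      intervalIntegral.integral_add_adjacent_intervals (hgint _ _) (hgint _ _)
    rw [hφ, abs_le]
    constructor
    · have heq : (∫ t in (0:ℝ)..r, (|Real.cos (t - α)| - 2 / π))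
          = - ∫ t in r..π, (|Real.cos (t - α)| - 2 / π) := by
        rw [hg0] at hgsplit; linarith
      rw [heq]
      have h3 : (∫ t in r..π, (|Real.cos (t - α)| - 2 / π)) ≤ B := by
        calc _ ≤ _ := hle2
          _ ≤ B := by rw [← hBval, ← hGsplit]; linarith
      linarith
    · calc _ ≤ _ := hle1
        _ ≤ B := by rw [← hBval, ← hGsplit]; linarith
  intro T hT
  have key : ∀ n : ℕ, ∀ T : ℝ, 0 ≤ T → T ≤ n * π →
      |(∫ t in (0:ℝ)..T, |Real.cos (t - α)|) - (2 / π) * T| ≤ B := by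
    intro n
    induction n with
    | zero =>
      intro T hT0 hTn
      simp only [Nat.cast_zero, zero_mul] at hTn
      exact hbase T hT0 (by linarith)
    | succ n ih =>
      intro T hT0 hTn
      by_cases hc : T ≤ π
      · exact hbase T hT0 hc
      · have h1 : 0 ≤ T - π := by linarith
        have h2 : T - π ≤ n * π := by push_cast at hTn ⊢; linarith
        have heq := hper (T - π)
        rw [sub_add_cancel] at heq
        rw [heq]
        exact ih (T - π) h1 h2
  obtain ⟨n, hn⟩ := exists_nat_ge (T / π)
  exact key n T hT (by rw [div_le_iff₀ hπ] at hn; linarith)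
end

section
/- Consider a trajectory of ẋ = y, ẏ = −sin x + ε u(t) with |u(t)| ≤ 1 along with adjoint variables satisfying φ' = (cos x) ψ, ψ' = −φ, and the identity y φ + (−sin x + ε u) ψ − 1 ≡ 0. If t₁ < t₂ are consecutive simple zeros of ψ, then y(t₁) · y(t₂) < 0. -/
open Real

/-- If `f t₁ = 0` and `f > 0` just to the right of `t₁`, then the derivative at `t₁` is `≥ 0`. -/
lemma deriv_nonneg_of_pos_right {f : ℝ → ℝ} {d t₁ t₂ : ℝ} (hlt : t₁ < t₂)
    (hd : HasDerivAt f d t₁) (h0 : f t₁ = 0)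
    (hpos : ∀ t ∈ Set.Ioo t₁ t₂, 0 < f t) : 0 ≤ d := by
  have hslope : Filter.Tendsto (slope f t₁) (nhdsWithin t₁ (Set.Ioi t₁ \ {t₁})) (nhds d) :=
    (hasDerivWithinAt_iff_tendsto_slope.mp (hd.hasDerivWithinAt (s := Set.Ioi t₁)))
  have heq : Set.Ioi t₁ \ {t₁} = Set.Ioi t₁ :=
    Set.diff_singleton_eq_self (by simp)
  rw [heq] at hslope
  refine le_of_tendsto_of_tendsto tendsto_const_nhds hslope ?_
  filter_upwards [Ioo_mem_nhdsGT_of_mem (Set.left_mem_Ico.mpr hlt)] with t ht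
  have h1 : 0 < t - t₁ := by simp [sub_pos]; exact ht.1
  have h2 : 0 < f t := hpos t ht
  simp only [slope_def_field, div_eq_inv_mul]
  rw [h0, sub_zero]
  positivity

/-- If `f t₂ = 0` and `f > 0` just to the left of `t₂`, then the derivative at `t₂` is `≤ 0`. -/
lemma deriv_nonpos_of_pos_left {f : ℝ → ℝ} {d t₁ t₂ : ℝ} (hlt : t₁ < t₂)
    (hd : HasDerivAt f d t₂) (h0 : f t₂ = 0)
    (hpos : ∀ t ∈ Set.Ioo t₁ t₂, 0 < f t) : d ≤ 0 := by
  have hslope : Filter.Tendsto (slope f t₂) (nhdsWithin t₂ (Set.Iio t₂ \ {t₂})) (nhds d) :=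
    (hasDerivWithinAt_iff_tendsto_slope.mp (hd.hasDerivWithinAt (s := Set.Iio t₂)))
  have heq : Set.Iio t₂ \ {t₂} = Set.Iio t₂ :=
    Set.diff_singleton_eq_self (by simp)
  rw [heq] at hslope
  refine le_of_tendsto_of_tendsto hslope tendsto_const_nhds ?_
  filter_upwards [Ioo_mem_nhdsLT_of_mem (Set.right_mem_Ioc.mpr hlt)] with t ht
  have h1 : t - t₂ < 0 := by simp [sub_neg]; exact ht.2
  have h2 : 0 < f t := hpos t ht
  rw [slope_def_field, div_eq_inv_mul, h0]
  have : f t - 0 = f t := by ring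
  rw [this]
  exact mul_nonpos_of_nonpos_of_nonneg (inv_nonpos.mpr (by linarith [sub_nonpos.mpr (le_of_lt ht.2)])) (le_of_lt h2)

/-- Basic Lemma: along an extremal of the minimum-time pendulum problem, the velocities at
two consecutive simple zeros of the adjoint variable `ψ` have opposite signs. -/
theorem basic_lemma (ε : ℝ) (x y φ ψ u : ℝ → ℝ)
    (hu : ∀ t, |u t| ≤ 1)
    (hx : ∀ t, HasDerivAt x (y t) t)
    (hy : ∀ t, HasDerivAt y (-Real.sin (x t) + ε * u t) t)
    (hφ : ∀ t, HasDerivAt φ (Real.cos (x t) * ψ t) t)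
    (hψ : ∀ t, HasDerivAt ψ (-(φ t)) t)
    (hH : ∀ t, y t * φ t + (-Real.sin (x t) + ε * u t) * ψ t - 1 = 0)
    (t₁ t₂ : ℝ) (hlt : t₁ < t₂)
    (hz₁ : ψ t₁ = 0) (hz₂ : ψ t₂ = 0)
    (hs₁ : deriv ψ t₁ ≠ 0) (hs₂ : deriv ψ t₂ ≠ 0)
    (hconsec : ∀ t ∈ Set.Ioo t₁ t₂, ψ t ≠ 0) :
    y t₁ * y t₂ < 0 := by
  -- the derivative of ψ is -φ
  have hd₁ : deriv ψ t₁ = -(φ t₁) := (hψ t₁).deriv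
  have hd₂ : deriv ψ t₂ = -(φ t₂) := (hψ t₂).deriv
  have hφ₁ : φ t₁ ≠ 0 := by rw [hd₁] at hs₁; simpa using hs₁
  have hφ₂ : φ t₂ ≠ 0 := by rw [hd₂] at hs₂; simpa using hs₂
  have hcont : Continuous ψ := continuous_iff_continuousAt.mpr fun t => (hψ t).continuousAt
  -- ψ has constant sign on (t₁, t₂)
  have hsign : (∀ t ∈ Set.Ioo t₁ t₂, 0 < ψ t) ∨ (∀ t ∈ Set.Ioo t₁ t₂, ψ t < 0) := by
    by_contra h
    push_neg at h
    obtain ⟨⟨a, ha, hfa⟩, ⟨b, hb, hfb⟩⟩ := h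
    have hfa' : ψ a < 0 := lt_of_le_of_ne hfa (hconsec a ha)
    have hfb' : 0 < ψ b := lt_of_le_of_ne (by linarith) (Ne.symm (hconsec b hb))
    rcases lt_trichotomy a b with hab | hab | hab
    · obtain ⟨c, hc, hc0⟩ := intermediate_value_Ioo hab.le
        hcont.continuousOn ⟨hfa', hfb'⟩
      exact hconsec c ⟨lt_trans ha.1 hc.1, lt_trans hc.2 hb.2⟩ hc0
    · rw [hab] at hfa'; linarith
    · obtain ⟨c, hc, hc0⟩ := intermediate_value_Ioo' hab.le
        hcont.continuousOn ⟨hfa', hfb'⟩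
      exact hconsec c ⟨lt_trans hb.1 hc.1, lt_trans hc.2 ha.2⟩ hc0
  -- φ t₁ * φ t₂ < 0
  have hkey : φ t₁ * φ t₂ < 0 := by
    rcases hsign with hp | hn
    · have h1 : 0 ≤ -(φ t₁) := deriv_nonneg_of_pos_right hlt (hψ t₁) hz₁ hp
      have h2 : -(φ t₂) ≤ 0 := deriv_nonpos_of_pos_left hlt (hψ t₂) hz₂ hp
      have : φ t₁ < 0 := lt_of_le_of_ne (by linarith) hφ₁
      have : 0 < φ t₂ := lt_of_le_of_ne (by linarith) (Ne.symm hφ₂)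
      nlinarith
    · have hp' : ∀ t ∈ Set.Ioo t₁ t₂, 0 < (fun s => -(ψ s)) t := fun t ht => by
        simpa using (hn t ht)
      have h1 : 0 ≤ -(-(φ t₁)) :=
        deriv_nonneg_of_pos_right hlt ((hψ t₁).neg) (by simp [hz₁]) hp'
      have h2 : -(-(φ t₂)) ≤ 0 :=
        deriv_nonpos_of_pos_left hlt ((hψ t₂).neg) (by simp [hz₂]) hp'
      have : 0 < φ t₁ := lt_of_le_of_ne (by linarith) (Ne.symm hφ₁)
      have : φ t₂ < 0 := lt_of_le_of_ne (by linarith) hφ₂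
      nlinarith
  -- from the Hamiltonian identity, y φ = 1 at zeros of ψ
  have h1 : y t₁ * φ t₁ = 1 := by have := hH t₁; rw [hz₁] at this; linarith
  have h2 : y t₂ * φ t₂ = 1 := by have := hH t₂; rw [hz₂] at this; linarith
  nlinarith [hkey, h1, h2, mul_pos_iff.mp (by nlinarith : (0:ℝ) < (y t₁ * φ t₁) * (y t₂ * φ t₂))]
end
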